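/- Let n ≥ 3, let S = {1, …, n+1}, and let P ⊂ ℝ^n be the convex hull of the points e_I = Σ_{i ∈ I} e_i for all nonempty proper subsets I of S, where e_1, …, e_n is the standard basis of ℝ^n and e_{n+1} = −e_1 − ⋯ − e_n. Then there is no finite directed graph G (with no loops and no multiple arrows) on the node set {1, …, n+1} and no linear isomorphism f : ℝ^n → H, where H = {(x_1, …, x_{n+1}) ∈ ℝ^{n+1} : x_1 + ⋯ + x_{n+1} = 0}, such that f(ℤ^n) = H ∩ ℤ^{n+1} and f(P) = P_G, where P_G is the convex hull in ℝ^{n+1} of the set {e_i − e_j : (i, j) an arrow of G}. -/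

import Mathlib

/-- For `S = {1, …, n+1}`: `eVec n i` is the `i`-th standard basis vector of `ℝ^n`
for `1 ≤ i ≤ n`, and `eVec n (n+1) = -e_1 - ⋯ - e_n`. -/
def eVec (n : ℕ) (i : ℕ) : Fin n → ℝ :=
  fun j => if i = (j : ℕ) + 1 then 1 else if i = n + 1 then -1 else 0

/-- `eSet n I = ∑ i ∈ I, e_i`. -/
def eSet (n : ℕ) (I : Finset ℕ) : Fin n → ℝ := ∑ i ∈ I, eVec n i

lemma eSet_apply (n : ℕ) (I : Finset ℕ) (j : Fin n) :
    eSet n I j = (if (j : ℕ) + 1 ∈ I then (1:ℝ) else 0) + (if n + 1 ∈ I then -1 else 0) := by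
  have hjn : (j : ℕ) + 1 ≠ n + 1 := by have := j.isLt; omega
  unfold eSet
  rw [Finset.sum_apply]
  have hc : ∀ i ∈ I, eVec n i j
      = (if i = (j : ℕ) + 1 then (1:ℝ) else 0) + (if i = n + 1 then -1 else 0) := by
    intro i _
    unfold eVec
    by_cases h1 : i = (j : ℕ) + 1
    · subst h1; simp [hjn, j.isLt.ne]
    · rw [if_neg h1, if_neg h1]; by_cases h2 : i = n + 1 <;> simp [h2]
  rw [Finset.sum_congr rfl hc, Finset.sum_add_distrib]
  simp [Finset.sum_ite_eq' I]

lemma l1_convexOn (k : ℕ) : ConvexOn ℝ Set.univ (fun x : Fin k → ℝ => ∑ l, |x l|) := by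
  refine ⟨convex_univ, fun x _ y _ a b ha hb _ => ?_⟩
  calc ∑ l, |(a • x + b • y) l| ≤ ∑ l, (a * |x l| + b * |y l|) := by
        refine Finset.sum_le_sum fun l _ => ?_
        simp only [Pi.add_apply, Pi.smul_apply, smul_eq_mul]
        calc |a * x l + b * y l| ≤ |a * x l| + |b * y l| := abs_add_le _ _
          _ = a * |x l| + b * |y l| := by
              rw [abs_mul, abs_mul, abs_of_nonneg ha, abs_of_nonneg hb]
    _ = a * ∑ l, |x l| + b * ∑ l, |y l| := by
        rw [Finset.sum_add_distrib, Finset.mul_sum, Finset.mul_sum]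
    _ = a • ∑ l, |x l| + b • ∑ l, |y l| := by simp

lemma l1_le_two {k : ℕ} {A : Finset (Fin k × Fin k)} (hA : ∀ a ∈ A, a.1 ≠ a.2)
    {x : Fin k → ℝ}
    (hx : x ∈ convexHull ℝ {v : Fin k → ℝ | ∃ a ∈ A, v = Pi.single a.1 1 - Pi.single a.2 1}) :
    ∑ l, |x l| ≤ 2 := by
  obtain ⟨y, hy, hle⟩ := (l1_convexOn k).exists_ge_of_mem_convexHull (Set.subset_univ _) hx
  obtain ⟨a, haA, rfl⟩ := hy
  have hij := hA a haA
  refine hle.trans (le_of_eq ?_)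
  have hval : ∀ l, |((Pi.single a.1 (1:ℝ) - Pi.single a.2 1 : Fin k → ℝ)) l|
      = (if l = a.1 then (1:ℝ) else 0) + (if l = a.2 then 1 else 0) := by
    intro l
    rcases eq_or_ne l a.1 with h1 | h1
    · rcases eq_or_ne l a.2 with h2 | h2
      · exact absurd (h1.symm.trans h2) hij
      · simp [h1, h2, Pi.single_apply, hij, Ne.symm hij]
    · rcases eq_or_ne l a.2 with h2 | h2 <;> simp [h1, h2, Pi.single_apply, hij, Ne.symm hij]
  rw [Finset.sum_congr rfl (fun l _ => hval l), Finset.sum_add_distrib]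
  simp [Finset.sum_ite_eq' (Finset.univ : Finset (Fin k))]
  norm_num

lemma sum_abs_int {k : ℕ} (m : Fin k → ℤ) (h0 : ∑ l, m l = 0) (h2 : ∑ l, |m l| ≤ 2) :
    (∀ l, m l = 0) ∨ ∃ i j : Fin k, i ≠ j ∧
      ∀ l, m l = (if l = i then 1 else 0) - (if l = j then 1 else 0) := by
  by_cases hm : ∀ l, m l = 0
  · exact Or.inl hm
  right
  push_neg at hm; obtain ⟨i0, hi0⟩ := hm
  set p : Fin k → ℤ := fun l => max (m l) 0 with hp
  set q : Fin k → ℤ := fun l => max (-(m l)) 0 with hq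
  have hpnn : ∀ l ∈ Finset.univ, (0:ℤ) ≤ p l := fun l _ => le_max_right _ _
  have hqnn : ∀ l ∈ Finset.univ, (0:ℤ) ≤ q l := fun l _ => le_max_right _ _
  have hpq : ∀ l, p l - q l = m l := fun l => by simp only [hp, hq]; omega
  have hpq' : ∀ l, p l + q l = |m l| := by
    intro l
    rcases le_total (m l) 0 with h | h
    · rw [abs_of_nonpos h]; simp only [hp, hq]; omega
    · rw [abs_of_nonneg h]; simp only [hp, hq]; omega
  have hsub : ∑ l, p l - ∑ l, q l = 0 := by
    rw [← Finset.sum_sub_distrib, Finset.sum_congr rfl (fun l _ => hpq l), h0]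
  have hadd : ∑ l, p l + ∑ l, q l ≤ 2 := by
    rw [← Finset.sum_add_distrib, Finset.sum_congr rfl (fun l _ => hpq' l)]; exact h2
  have hge : 1 ≤ ∑ l, p l := by
    rcases lt_or_gt_of_ne hi0 with h | h
    · have h1 : (1:ℤ) ≤ q i0 := by simp only [hq]; omega
      have := Finset.single_le_sum hqnn (Finset.mem_univ i0)
      omega
    · have h1 : (1:ℤ) ≤ p i0 := by simp only [hp]; omega
      have := Finset.single_le_sum hpnn (Finset.mem_univ i0)
      omega
  have hsp : ∑ l, p l = 1 := by omega
  have hsq : ∑ l, q l = 1 := by omega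
  have hexp : ∃ i, 1 ≤ p i := by
    by_contra h; push_neg at h
    have hz : ∀ l ∈ Finset.univ, p l = 0 := fun l _ => by
      have := h l; have := hpnn l (Finset.mem_univ l); omega
    rw [Finset.sum_eq_zero hz] at hsp; omega
  have hexq : ∃ j, 1 ≤ q j := by
    by_contra h; push_neg at h
    have hz : ∀ l ∈ Finset.univ, q l = 0 := fun l _ => by
      have := h l; have := hqnn l (Finset.mem_univ l); omega
    rw [Finset.sum_eq_zero hz] at hsq; omega
  obtain ⟨i, hi⟩ := hexp
  obtain ⟨j, hj⟩ := hexq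
  have hpe : p i + ∑ l ∈ Finset.univ.erase i, p l = 1 := by
    rw [Finset.add_sum_erase _ _ (Finset.mem_univ i)]; exact hsp
  have hqe : q j + ∑ l ∈ Finset.univ.erase j, q l = 1 := by
    rw [Finset.add_sum_erase _ _ (Finset.mem_univ j)]; exact hsq
  have hprest : ∀ l, l ≠ i → p l = 0 := by
    intro l hl
    have hnn : ∀ l' ∈ Finset.univ.erase i, (0:ℤ) ≤ p l' := fun l' _ => le_max_right _ _
    have hz : ∑ l' ∈ Finset.univ.erase i, p l' = 0 := by
      have := Finset.sum_nonneg hnn; omega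
    exact (Finset.sum_eq_zero_iff_of_nonneg hnn).1 hz l (Finset.mem_erase.2 ⟨hl, Finset.mem_univ l⟩)
  have hqrest : ∀ l, l ≠ j → q l = 0 := by
    intro l hl
    have hnn : ∀ l' ∈ Finset.univ.erase j, (0:ℤ) ≤ q l' := fun l' _ => le_max_right _ _
    have hz : ∑ l' ∈ Finset.univ.erase j, q l' = 0 := by
      have := Finset.sum_nonneg hnn; omega
    exact (Finset.sum_eq_zero_iff_of_nonneg hnn).1 hz l (Finset.mem_erase.2 ⟨hl, Finset.mem_univ l⟩)
  have hpi : p i = 1 := by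
    have hnn : (0:ℤ) ≤ ∑ l' ∈ Finset.univ.erase i, p l' :=
      Finset.sum_nonneg fun l' _ => le_max_right _ _
    omega
  have hqj : q j = 1 := by
    have hnn : (0:ℤ) ≤ ∑ l' ∈ Finset.univ.erase j, q l' :=
      Finset.sum_nonneg fun l' _ => le_max_right _ _
    omega
  have hij : i ≠ j := by
    intro hh; subst hh
    have h3 := hpq i; rw [hpi, hqj] at h3
    have h4 : p i = max (m i) 0 := by rw [hp]
    omega
  refine ⟨i, j, hij, fun l => ?_⟩
  rcases eq_or_ne l i with rfl | hli
  · have := hpq l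
    rw [hpi, hqrest l (by exact fun h => hij h)] at this
    simp [hij, ← this]
  · rcases eq_or_ne l j with rfl | hlj
    · have := hpq l
      rw [hqj, hprest l hli] at this
      simp [hli, ← this]
    · have := hpq l
      rw [hprest l hli, hqrest l hlj] at this
      simp [hli, hlj, ← this]

lemma classify_real {k : ℕ} (x : Fin k → ℝ) (hint : ∀ i, ∃ m : ℤ, x i = (m : ℝ))
    (h0 : ∑ i, x i = 0) (h2 : ∑ i, |x i| ≤ 2) :
    x = 0 ∨ ∃ i j : Fin k, i ≠ j ∧ x = Pi.single i 1 - Pi.single j 1 := by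
  choose m hm using hint
  have hm0 : ∑ l, m l = 0 := by
    have : ((∑ l, m l : ℤ) : ℝ) = 0 := by push_cast; rw [← h0]; exact Finset.sum_congr rfl (fun l _ => (hm l).symm)
    exact_mod_cast this
  have hm2 : ∑ l, |m l| ≤ 2 := by
    have : ((∑ l, |m l| : ℤ) : ℝ) ≤ 2 := by
      push_cast
      rw [show (∑ l, (|(m l : ℝ)|)) = ∑ l, |x l| from Finset.sum_congr rfl (fun l _ => by rw [hm l])]
      exact h2
    exact_mod_cast this
  rcases sum_abs_int m hm0 hm2 with h | ⟨i, j, hij, h⟩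
  · left; funext l; simp [hm l, h l]
  · right
    refine ⟨i, j, hij, funext fun l => ?_⟩
    rw [hm l, h l]
    simp only [Pi.sub_apply, Pi.single_apply]
    push_cast
    split_ifs <;> norm_num

lemma eSet_top {n : ℕ} {J J' : Finset ℕ} (h : eSet n J = eSet n J')
    (hne : J'.Nonempty) (hsub : J' ⊆ Finset.Icc 1 (n + 1))
    (htop : n + 1 ∈ J) (htop' : n + 1 ∉ J') : False := by
  have hnot : ∀ j : Fin n, (j : ℕ) + 1 ∉ J' := by
    intro j hj
    have hc := congrFun h j
    rw [eSet_apply, eSet_apply, if_pos htop, if_neg htop', if_pos hj] at hc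
    split_ifs at hc <;> norm_num at hc
  obtain ⟨a, ha⟩ := hne
  have haI := hsub ha; rw [Finset.mem_Icc] at haI
  have han : a ≠ n + 1 := fun e => htop' (e ▸ ha)
  have hlt : a - 1 < n := by omega
  have : ((⟨a - 1, hlt⟩ : Fin n) : ℕ) + 1 = a := by simp; omega
  exact hnot ⟨a - 1, hlt⟩ (by rw [this]; exact ha)

lemma eSet_inj {n : ℕ} {I I' : Finset ℕ}
    (h1 : I.Nonempty) (h2 : I ⊂ Finset.Icc 1 (n + 1))
    (h1' : I'.Nonempty) (h2' : I' ⊂ Finset.Icc 1 (n + 1))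
    (h : eSet n I = eSet n I') : I = I' := by
  have htops : (n + 1 ∈ I) ↔ (n + 1 ∈ I') := by
    constructor
    · intro ht; by_contra ht'; exact eSet_top h h1' h2'.subset ht ht'
    · intro ht; by_contra ht'; exact eSet_top h.symm h1 h2.subset ht ht'
  ext a
  by_cases hmem : a ∈ Finset.Icc 1 (n + 1)
  · rw [Finset.mem_Icc] at hmem
    rcases eq_or_ne a (n + 1) with rfl | hane
    · exact htops
    · have hlt : a - 1 < n := by omega
      set j : Fin n := ⟨a - 1, hlt⟩ with hj
      have hja : (j : ℕ) + 1 = a := by simp [hj]; omega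
      have hc := congrFun h j
      rw [eSet_apply, eSet_apply, hja] at hc
      have h2nd : (if n + 1 ∈ I then (-1:ℝ) else 0) = (if n + 1 ∈ I' then -1 else 0) :=
        if_congr htops rfl rfl
      have h1st : (if a ∈ I then (1:ℝ) else 0) = (if a ∈ I' then 1 else 0) := by linarith
      by_cases hI : a ∈ I <;> by_cases hI' : a ∈ I' <;>
        simp only [hI, hI', if_true, if_false, if_pos, if_neg, not_false_iff] at h1st ⊢ <;>
        first | rfl | norm_num at h1st | (exact iff_of_true hI hI') | (exact iff_of_false hI hI') | tauto
  · exact iff_of_false (fun ha => hmem (h2.subset ha)) (fun ha => hmem (h2'.subset ha))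

lemma pow_gt (n : ℕ) (hn : 3 ≤ n) : n ^ 2 + n + 3 < 2 ^ (n + 1) := by
  induction n, hn using Nat.le_induction with
  | base => norm_num
  | succ n hn ih =>
    have : 2 ^ (n + 2) = 2 * 2 ^ (n + 1) := by ring
    rw [this]
    nlinarith [ih, sq_nonneg n]

/-- For `n ≥ 3`, the reflexive polytope of the building set `2^S \ {∅}` (the convex
hull of the `e_I` for nonempty proper `I ⊆ S`) is not lattice-equivalent to the
polytope `P_G` of any finite directed graph `G` (a loopless arrow set on `n+1` nodes):
there is no injective linear map `f : ℝ^n → ℝ^{n+1}` with range the hyperplane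
`H = {∑ xᵢ = 0}`, matching lattice points, and sending the polytope to `P_G`. -/
theorem stmt_9 (n : ℕ) (hn : 3 ≤ n) :
    ¬∃ (A : Finset (Fin (n + 1) × Fin (n + 1)))
      (f : (Fin n → ℝ) →ₗ[ℝ] (Fin (n + 1) → ℝ)),
      (∀ a ∈ A, a.1 ≠ a.2) ∧
      Function.Injective f ∧
      Set.range f = {x : Fin (n + 1) → ℝ | ∑ i, x i = 0} ∧
      f '' {x : Fin n → ℝ | ∀ i, ∃ m : ℤ, x i = (m : ℝ)} =
        {x : Fin (n + 1) → ℝ | ∑ i, x i = 0} ∩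
          {x : Fin (n + 1) → ℝ | ∀ i, ∃ m : ℤ, x i = (m : ℝ)} ∧
      f '' (convexHull ℝ
          {v : Fin n → ℝ | ∃ I : Finset ℕ, I.Nonempty ∧ I ⊂ Finset.Icc 1 (n + 1) ∧
            v = eSet n I}) =
        convexHull ℝ {v : Fin (n + 1) → ℝ |
          ∃ a ∈ A, v = Pi.single a.1 1 - Pi.single a.2 1} := by
  rintro ⟨A, f, hA, hinj, hrange, hlat, hP⟩
  classical
  set S : Finset ℕ := Finset.Icc 1 (n + 1) with hS
  set 𝓕 : Finset (Finset ℕ) := S.powerset.filter (fun I => I.Nonempty ∧ I ⊂ S) with hF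
  have hScard : S.card = n + 1 := by rw [hS, Nat.card_Icc]; omega
  have hSne : S ≠ ∅ := by
    have : (1 : ℕ) ∈ S := by rw [hS]; simp [Finset.mem_Icc]
    intro h; rw [h] at this; exact absurd this (Finset.notMem_empty 1)
  have hFeq : 𝓕 = S.powerset \ {∅, S} := by
    ext I
    simp only [hF, Finset.mem_filter, Finset.mem_powerset, Finset.mem_sdiff,
      Finset.mem_insert, Finset.mem_singleton, Finset.nonempty_iff_ne_empty,
      Finset.ssubset_iff_subset_ne, not_or]
    tauto
  have hpair : ({∅, S} : Finset (Finset ℕ)) ⊆ S.powerset := by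
    intro J hJ
    rcases Finset.mem_insert.1 hJ with rfl | hJ
    · simp
    · rw [Finset.mem_singleton.1 hJ]; simp
  have hpaircard : ({∅, S} : Finset (Finset ℕ)).card = 2 := by
    rw [Finset.card_insert_of_notMem (by simpa using Ne.symm hSne)]
    simp
  have hFcard : 𝓕.card = 2 ^ (n + 1) - 2 := by
    rw [hFeq, Finset.card_sdiff_of_subset hpair, Finset.card_powerset, hScard, hpaircard]
  set D : Finset (Fin (n + 1) × Fin (n + 1)) :=
    Finset.univ.filter (fun p => p.1 ≠ p.2) with hD
  set T : Finset (Fin (n + 1) → ℝ) :=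
    insert 0 (D.image (fun p => Pi.single p.1 (1:ℝ) - Pi.single p.2 1)) with hT
  have hDcard : D.card ≤ n ^ 2 + n := by
    have hsplit := Finset.card_filter_add_card_filter_not
      (s := (Finset.univ : Finset (Fin (n + 1) × Fin (n + 1))))
      (p := fun p => p.1 ≠ p.2)
    have hdiag : (n + 1) ≤
        ((Finset.univ : Finset (Fin (n + 1) × Fin (n + 1))).filter
          (fun p => ¬ p.1 ≠ p.2)).card := by
      have h := Finset.card_le_card_of_injOn
        (s := (Finset.univ : Finset (Fin (n + 1))))
        (t := (Finset.univ : Finset (Fin (n + 1) × Fin (n + 1))).filter (fun p => ¬ p.1 ≠ p.2))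
        (fun i : Fin (n + 1) => (i, i))
        (fun i _ => by simp)
        (fun a _ b _ h => by simpa [Prod.ext_iff] using h)
      simpa using h
    have huniv : (Finset.univ : Finset (Fin (n + 1) × Fin (n + 1))).card = n ^ 2 + 2 * n + 1 := by
      simp only [Finset.card_univ, Fintype.card_prod, Fintype.card_fin]
      ring
    rw [hD]
    omega
  have hTcard : T.card ≤ n ^ 2 + n + 1 := by
    have himg := Finset.card_image_le (s := D)
      (f := (fun p => Pi.single p.1 (1:ℝ) - Pi.single p.2 1 :
        Fin (n + 1) × Fin (n + 1) → (Fin (n + 1) → ℝ)))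
    have hins := Finset.card_insert_le (0 : Fin (n + 1) → ℝ)
      (D.image (fun p => Pi.single p.1 (1:ℝ) - Pi.single p.2 1))
    rw [hT]
    omega
  have hmaps : ∀ I ∈ 𝓕, f (eSet n I) ∈ T := by
    intro I hI
    have hmf := Finset.mem_filter.1 hI
    have hIne := hmf.2.1
    have hIss := hmf.2.2
    have hxP : f (eSet n I) ∈ convexHull ℝ {v : Fin (n + 1) → ℝ |
        ∃ a ∈ A, v = Pi.single a.1 1 - Pi.single a.2 1} := by
      rw [← hP]
      exact Set.mem_image_of_mem _ (subset_convexHull ℝ _ ⟨I, hIne, hIss, rfl⟩)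
    have h2 : ∑ l, |f (eSet n I) l| ≤ 2 := l1_le_two hA hxP
    have hmemim : f (eSet n I) ∈ f '' {x : Fin n → ℝ | ∀ i, ∃ m : ℤ, x i = (m : ℝ)} := by
      refine Set.mem_image_of_mem _ ?_
      intro j
      refine ⟨(if (j : ℕ) + 1 ∈ I then 1 else 0) + (if n + 1 ∈ I then -1 else 0), ?_⟩
      rw [eSet_apply]
      push_cast
      split_ifs <;> norm_num
    rw [hlat] at hmemim
    obtain ⟨h0, hintx⟩ := hmemim
    rcases classify_real _ hintx h0 h2 with hz | ⟨i, j, hij, hx⟩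
    · rw [hz, hT]; exact Finset.mem_insert_self 0 _
    · rw [hx, hT]
      refine Finset.mem_insert_of_mem (Finset.mem_image.2 ⟨(i, j), ?_, rfl⟩)
      rw [hD, Finset.mem_filter]
      exact ⟨Finset.mem_univ _, hij⟩
  have hinjOn : Set.InjOn (fun I => f (eSet n I)) ↑𝓕 := by
    intro I hI I' hI' he
    have h1 := Finset.mem_filter.1 (Finset.mem_coe.1 hI)
    have h2 := Finset.mem_filter.1 (Finset.mem_coe.1 hI')
    exact eSet_inj h1.2.1 h1.2.2 h2.2.1 h2.2.2 (hinj he)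
  have hcard := Finset.card_le_card_of_injOn (fun I => f (eSet n I)) hmaps hinjOn
  have hpow := pow_gt n hn
  have h16 : 16 ≤ 2 ^ (n + 1) := by
    calc (16 : ℕ) = 2 ^ 4 := by norm_num
      _ ≤ 2 ^ (n + 1) := Nat.pow_le_pow_right (by norm_num) (by omega)
  omega
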